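/- Let r, β > 0 be real constants and L1, L2 real with L2 > L1·e^r > e^{2r} and (L2 − L1·e^r)·e^β > (L1 − e^r)·e^r. Then L1 < (L2·e^{β−r} + e^r)/(e^β + 1). Consequently, defining V1* = (L1 − e^r)²/(e^β − 1) and V1# = (M − e^r)²/(e^β − 1) with M = (L2·e^{β−r} + e^r)/(e^β + 1), one has V1* < V1#. -/
import Mathlib


open Real

theorem stmt_1 (r β L1 L2 : ℝ) (hr : 0 < r) (hβ : 0 < β)
    (h1 : L2 > L1 * exp r) (h2 : L1 * exp r > exp (2 * r))
    (h3 : (L2 - L1 * exp r) * exp β > (L1 - exp r) * exp r) :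
    L1 < (L2 * exp (β - r) + exp r) / (exp β + 1) ∧
    (L1 - exp r) ^ 2 / (exp β - 1) <
      ((L2 * exp (β - r) + exp r) / (exp β + 1) - exp r) ^ 2 / (exp β - 1) := by
  have hepos := exp_pos r
  have hβ1 : (1:ℝ) < exp β := by
    have := exp_lt_exp.mpr hβ; simpa using this
  have hL1 : exp r < L1 := by
    have h2r : exp (2 * r) = exp r * exp r := by
      rw [← exp_add]; ring_nf
    nlinarith [exp_pos r]
  have he : exp (β - r) * exp r = exp β := by rw [← exp_add]; ring_nf
  have h3' : (L2 - L1 * exp r) * exp (β - r) > L1 - exp r := by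
    have h3'' : ((L1 - exp r)) * exp r < ((L2 - L1 * exp r) * exp (β - r)) * exp r := by
      calc (L1 - exp r) * exp r < (L2 - L1 * exp r) * exp β := h3
        _ = ((L2 - L1 * exp r) * exp (β - r)) * exp r := by rw [mul_assoc, he]
    exact lt_of_mul_lt_mul_right h3'' hepos.le
  have hM : L1 < (L2 * exp (β - r) + exp r) / (exp β + 1) := by
    rw [lt_div_iff₀ (by positivity)]
    nlinarith [exp_pos (β - r)]
  refine ⟨hM, ?_⟩
  have hnum : (L1 - exp r) ^ 2 <
      ((L2 * exp (β - r) + exp r) / (exp β + 1) - exp r) ^ 2 := by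
    nlinarith [hM, hL1]
  have hd : (0:ℝ) < exp β - 1 := by linarith
  gcongr
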